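/- For sufficiently large k, the complete 4-ary tree with k levels admits no empty-ply drawing. Concretely, for all k ≥ 2^16 (k even), there is no straight-line drawing of the complete rooted tree in which every internal vertex has exactly 4 children and all leaves are at depth k, such that each ply-disk contains no vertex other than its center. -/

import Mathlib

open Real EuclideanGeometry Metric

noncomputable def plyRadius {V : Type*} (G : SimpleGraph V)
    (pos : V → EuclideanSpace ℝ (Fin 2)) (v : V) : ℝ :=
  (1 / 2) * ⨆ w ∈ G.neighborSet v, dist (pos v) (pos w)

/-- A drawing is empty-ply if no ply-disk contains a vertex other than its center
in its interior. -/
def IsEmptyPly {V : Type*} (G : SimpleGraph V)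
    (pos : V → EuclideanSpace ℝ (Fin 2)) : Prop :=
  ∀ u v : V, u ≠ v → plyRadius G pos v ≤ dist (pos u) (pos v)

/-- The complete rooted 4-ary tree with `k` levels: vertices are words over
`Fin 4` of length at most `k` (the root is the empty word, leaves are the words
of length exactly `k`), and a vertex is adjacent to its children. -/
def T4 (k : ℕ) : SimpleGraph {l : List (Fin 4) // l.length ≤ k} :=
  SimpleGraph.fromRel (fun a b => ∃ x : Fin 4, b.1 = x :: a.1)

namespace Stmt14Aux

open Finset MeasureTheory
open scoped Classical

/-! ### A disk-packing lemma in the Euclidean plane -/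

lemma packing {ι : Type*} (s : Finset ι) (c : ι → EuclideanSpace ℝ (Fin 2))
    (ρ : ι → ℝ) (x₀ : EuclideanSpace ℝ (Fin 2)) (R : ℝ) (hR : 0 ≤ R)
    (hρ : ∀ i ∈ s, 0 ≤ ρ i)
    (hsub : ∀ i ∈ s, dist (c i) x₀ + ρ i ≤ R)
    (hsep : ∀ i ∈ s, ∀ j ∈ s, i ≠ j → ρ i + ρ j ≤ dist (c i) (c j)) :
    ∑ i ∈ s, ρ i ^ 2 ≤ R ^ 2 := by
  have hd : (↑s : Set ι).PairwiseDisjoint fun i => Metric.ball (c i) (ρ i) := by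
    intro i hi j hj hij
    exact Metric.ball_disjoint_ball (hsep i hi j hj hij)
  have hmeas : volume (⋃ i ∈ s, Metric.ball (c i) (ρ i))
      = ∑ i ∈ s, volume (Metric.ball (c i) (ρ i)) :=
    measure_biUnion_finset hd fun i _ => measurableSet_ball
  have hsubU : (⋃ i ∈ s, Metric.ball (c i) (ρ i)) ⊆ Metric.ball x₀ R := by
    refine Set.iUnion₂_subset fun i hi => Metric.ball_subset_ball' ?_
    have h1 := hsub i hi
    linarith [dist_comm (c i) x₀]
  have hle : ∑ i ∈ s, volume (Metric.ball (c i) (ρ i)) ≤ volume (Metric.ball x₀ R) := by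
    rw [← hmeas]; exact measure_mono hsubU
  have hvol : ∀ (x : EuclideanSpace ℝ (Fin 2)) (r : ℝ),
      volume (Metric.ball x r) = ENNReal.ofReal r ^ 2 *
        ENNReal.ofReal (Real.sqrt π ^ 2 / Real.Gamma ((2 : ℝ) / 2 + 1)) := by
    intro x r
    have := EuclideanSpace.volume_ball (Fin 2) x r
    simpa [Fintype.card_fin] using this
  set κ : ENNReal := ENNReal.ofReal (Real.sqrt π ^ 2 / Real.Gamma ((2 : ℝ) / 2 + 1)) with hκ
  have hκ0 : κ ≠ 0 := by
    rw [hκ]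
    simp only [ne_eq, ENNReal.ofReal_eq_zero, not_le]
    apply div_pos
    · exact pow_pos (Real.sqrt_pos.mpr Real.pi_pos) 2
    · exact Real.Gamma_pos_of_pos (by norm_num)
  have hκtop : κ ≠ ⊤ := ENNReal.ofReal_ne_top
  simp only [hvol] at hle
  rw [← Finset.sum_mul] at hle
  have hle2 : ∑ i ∈ s, ENNReal.ofReal (ρ i) ^ 2 ≤ ENNReal.ofReal R ^ 2 :=
    (ENNReal.mul_le_mul_iff_left hκ0 hκtop).mp hle
  have heq : ∑ i ∈ s, ENNReal.ofReal (ρ i) ^ 2 = ENNReal.ofReal (∑ i ∈ s, ρ i ^ 2) := by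
    rw [ENNReal.ofReal_sum_of_nonneg fun i hi => sq_nonneg (ρ i)]
    exact Finset.sum_congr rfl fun i hi => (ENNReal.ofReal_pow (hρ i hi) 2).symm
  rw [heq, ← ENNReal.ofReal_pow hR] at hle2
  exact (ENNReal.ofReal_le_ofReal_iff (sq_nonneg R)).mp hle2

/-! ### The counting lemma -/

lemma natlem (k : ℕ) (hk : 65536 ≤ k + 1) (g b : ℕ → ℕ) (hg0 : g 0 = 1)
    (hrec : ∀ j, j < k → g (j + 1) + b (j + 1) = 4 * g j) :
    65536 * 4 ^ k ≤ ∑ j ∈ Finset.range (k + 1), (g j + 65536 * b j) * 4 ^ (k - j) := by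
  set G : ℕ → ℕ := fun j => g j * 4 ^ (k - j) with hG
  set B : ℕ → ℕ := fun j => b j * 4 ^ (k - j) with hB
  have step : ∀ j, j < k → G j = G (j + 1) + B (j + 1) := by
    intro j hj
    have h1 : k - j = (k - (j + 1)) + 1 := by omega
    simp only [hG, hB]
    rw [h1, pow_succ, ← mul_assoc, ← add_mul, hrec j hj]
    ring
  have tele : ∀ m, m ≤ k → G 0 = G m + ∑ j ∈ Finset.range m, B (j + 1) := by
    intro m
    induction m with
    | zero => simp
    | succ m ih =>
      intro hm
      rw [ih (by omega), Finset.sum_range_succ, step m (by omega)]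
      ring
  have anti : ∀ j, j < k → G (j + 1) ≤ G j := by
    intro j hj; rw [step j hj]; omega
  have hGk : ∀ j, j ≤ k → G k ≤ G j := by
    have key : ∀ m, m ≤ k → G k ≤ G (k - m) := by
      intro m
      induction m with
      | zero => simp
      | succ m ih =>
        intro hm
        have h1 : k - m = (k - (m + 1)) + 1 := by omega
        have := anti (k - (m + 1)) (by omega)
        calc G k ≤ G (k - m) := ih (by omega)
          _ = G ((k - (m + 1)) + 1) := by rw [← h1]
          _ ≤ G (k - (m + 1)) := this
    intro j hj
    have := key (k - j) (by omega)
    rwa [Nat.sub_sub_self hj] at this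
  have hsum : ∑ j ∈ Finset.range (k + 1), (g j + 65536 * b j) * 4 ^ (k - j)
      = (∑ j ∈ Finset.range (k + 1), G j) + 65536 * ∑ j ∈ Finset.range (k + 1), B j := by
    rw [Finset.mul_sum, ← Finset.sum_add_distrib]
    refine Finset.sum_congr rfl fun j hj => ?_
    simp only [hG, hB]; ring
  rw [hsum]
  have h1 : 65536 * G k ≤ ∑ j ∈ Finset.range (k + 1), G j := by
    calc 65536 * G k ≤ (k + 1) * G k := Nat.mul_le_mul_right _ hk
      _ = ∑ _j ∈ Finset.range (k + 1), G k := by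
          rw [Finset.sum_const, Finset.card_range]; ring
      _ ≤ ∑ j ∈ Finset.range (k + 1), G j := by
          refine Finset.sum_le_sum fun j hj => hGk j ?_
          simpa [Nat.lt_succ_iff] using hj
  have h2 : ∑ j ∈ Finset.range k, B (j + 1) ≤ ∑ j ∈ Finset.range (k + 1), B j := by
    rw [Finset.sum_range_succ']
    omega
  have h3 : G k + ∑ j ∈ Finset.range k, B (j + 1) = 4 ^ k := by
    have h30 : G 0 = 4 ^ k := by simp [hG, hg0]
    rw [← h30]
    exact (tele k le_rfl).symm
  have h4 : 65536 * (∑ j ∈ Finset.range k, B (j + 1)) ≤ 65536 * ∑ j ∈ Finset.range (k + 1), B j :=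
    Nat.mul_le_mul_left _ h2
  omega


/-! ### The tree structure -/

abbrev Vk (k : ℕ) := {l : List (Fin 4) // l.length ≤ k}

noncomputable def rr (k : ℕ) (pos : Vk k → EuclideanSpace ℝ (Fin 2)) : Vk k → ℝ :=
  plyRadius (T4 k) pos

def rt (k : ℕ) : Vk k := ⟨[], by simp⟩

def childF (k : ℕ) (p : Vk k) (x : Fin 4) : Vk k :=
  if h : p.1.length < k then ⟨x :: p.1, h⟩ else p

lemma childF_val {k : ℕ} {p : Vk k} (hp : p.1.length < k) (x : Fin 4) :
    (childF k p x).1 = x :: p.1 := by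
  unfold childF; rw [dif_pos hp]

lemma adj_childF {k : ℕ} {p : Vk k} (hp : p.1.length < k) (x : Fin 4) :
    (T4 k).Adj p (childF k p x) := by
  rw [T4, SimpleGraph.fromRel_adj]
  refine ⟨?_, Or.inl ⟨x, childF_val hp x⟩⟩
  intro h
  have h2 : p.1.length = (childF k p x).1.length := by rw [← h]
  rw [childF_val hp x] at h2
  simp at h2

lemma nbr_finite (k : ℕ) (v : Vk k) : ((T4 k).neighborSet v).Finite := by
  have hsub : (T4 k).neighborSet v ⊆ Set.range (fun p : Fin 4 × Bool =>
      if p.2 then childF k v p.1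
      else ⟨v.1.tail, by simp only [List.length_tail]; exact le_trans (Nat.sub_le _ _) v.2⟩) := by
    intro w hw
    have hadj : (T4 k).Adj v w := hw
    rw [T4, SimpleGraph.fromRel_adj] at hadj
    obtain ⟨hne, hcase⟩ := hadj
    rcases hcase with ⟨x, hx⟩ | ⟨x, hx⟩
    · refine ⟨(x, true), ?_⟩
      have hlen : v.1.length < k := by
        have h2 := w.2
        rw [hx] at h2
        simpa using h2
      simp only [if_pos]
      exact Subtype.ext ((childF_val hlen x).trans hx.symm)
    · refine ⟨(x, false), ?_⟩
      simp only [Bool.false_eq_true, if_neg, not_false_iff]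
      apply Subtype.ext
      simp [hx]
  exact Set.Finite.subset (Set.finite_range _) hsub

lemma dist_le_two_rr (k : ℕ) (pos : Vk k → EuclideanSpace ℝ (Fin 2)) {v w : Vk k}
    (h : (T4 k).Adj v w) : dist (pos v) (pos w) ≤ 2 * rr k pos v := by
  classical
  have hw : w ∈ (T4 k).neighborSet v := h
  set F : Vk k → ℝ := fun u => ⨆ _ : u ∈ (T4 k).neighborSet v, dist (pos v) (pos u) with hF
  have hfin : ((T4 k).neighborSet v).Finite := nbr_finite k v
  have hsubset : Set.range F ⊆
      insert 0 ((fun u => dist (pos v) (pos u)) '' (T4 k).neighborSet v) := by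
    rintro y ⟨u, rfl⟩
    by_cases hu : u ∈ (T4 k).neighborSet v
    · refine Set.mem_insert_of_mem _ ⟨u, hu, ?_⟩
      have h5 : F u = dist (pos v) (pos u) := ciSup_pos hu
      exact h5.symm
    · left
      simp only [hF]
      rw [ciSup_neg hu, Real.sSup_empty]
  have hb : BddAbove (Set.range F) :=
    BddAbove.mono hsubset ((hfin.image _).insert 0).bddAbove
  have h1 : F w ≤ ⨆ u, F u := le_ciSup hb w
  have h2 : F w = dist (pos v) (pos w) := ciSup_pos hw
  have h3 : rr k pos v = 1 / 2 * ⨆ u, F u := rfl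
  rw [h2] at h1
  rw [h3]
  linarith

lemma rr_nonneg (k : ℕ) (pos : Vk k → EuclideanSpace ℝ (Fin 2)) {v w : Vk k}
    (h : (T4 k).Adj v w) : 0 ≤ rr k pos v := by
  have h1 := dist_le_two_rr k pos h
  have h2 : (0:ℝ) ≤ dist (pos v) (pos w) := dist_nonneg
  linarith

/-! ### Caps, distances, good and bad sets -/

noncomputable def r0 (k : ℕ) (pos : Vk k → EuclideanSpace ℝ (Fin 2)) : ℝ := rr k pos (rt k)

noncomputable def tau (k : ℕ) (pos : Vk k → EuclideanSpace ℝ (Fin 2)) (j : ℕ) : ℝ :=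
  (if j ≤ 4 then (2:ℝ) ^ j else 256 / 2 ^ j) * r0 k pos

noncomputable def Dd (k : ℕ) (pos : Vk k → EuclideanSpace ℝ (Fin 2)) : ℕ → ℝ
  | 0 => 0
  | j + 1 => Dd k pos j + 2 * tau k pos (j + 1)

noncomputable def kids (k : ℕ) (s : Finset (Vk k)) : Finset (Vk k) :=
  (s ×ˢ (Finset.univ : Finset (Fin 4))).image fun pc => childF k pc.1 pc.2

noncomputable def Good (k : ℕ) (pos : Vk k → EuclideanSpace ℝ (Fin 2)) : ℕ → Finset (Vk k)
  | 0 => {rt k}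
  | j + 1 => (kids k (Good k pos j)).filter fun v => rr k pos v ≤ tau k pos (j + 1)

noncomputable def Bad (k : ℕ) (pos : Vk k → EuclideanSpace ℝ (Fin 2)) : ℕ → Finset (Vk k)
  | 0 => ∅
  | j + 1 => kids k (Good k pos j) \ Good k pos (j + 1)

lemma mem_kids {k : ℕ} {s : Finset (Vk k)} {v : Vk k} :
    v ∈ kids k s ↔ ∃ p ∈ s, ∃ x : Fin 4, v = childF k p x := by
  simp only [kids, Finset.mem_image, Finset.mem_product, Finset.mem_univ, and_true, Prod.exists]
  constructor
  · rintro ⟨p, x, hp, rfl⟩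
    exact ⟨p, hp, x, rfl⟩
  · rintro ⟨p, hp, x, rfl⟩
    exact ⟨p, x, hp, rfl⟩

lemma tau_nonneg {k : ℕ} {pos : Vk k → EuclideanSpace ℝ (Fin 2)}
    (h0 : 0 ≤ r0 k pos) (j : ℕ) : 0 ≤ tau k pos j := by
  unfold tau
  apply mul_nonneg _ h0
  split <;> positivity

lemma tau_le16 {k : ℕ} {pos : Vk k → EuclideanSpace ℝ (Fin 2)}
    (h0 : 0 ≤ r0 k pos) (j : ℕ) : tau k pos j ≤ 16 * r0 k pos := by
  unfold tau
  apply mul_le_mul_of_nonneg_right _ h0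
  split
  · rename_i hj
    calc (2:ℝ) ^ j ≤ 2 ^ 4 := pow_le_pow_right₀ (by norm_num) hj
      _ = 16 := by norm_num
  · rename_i hj
    have h5 : 5 ≤ j := by omega
    have h32 : (32:ℝ) ≤ 2 ^ j := by
      calc (32:ℝ) = 2 ^ 5 := by norm_num
        _ ≤ 2 ^ j := pow_le_pow_right₀ (by norm_num) h5
    have hpos : (0:ℝ) < 2 ^ j := by positivity
    rw [div_le_iff₀ hpos]
    nlinarith

lemma tau_succ_small {k : ℕ} {pos : Vk k → EuclideanSpace ℝ (Fin 2)} {j : ℕ} (hj : j ≤ 3) :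
    tau k pos (j + 1) = 2 * tau k pos j := by
  unfold tau
  rw [if_pos (by omega : j + 1 ≤ 4), if_pos (by omega : j ≤ 4), pow_succ]
  ring

lemma tau_succ_big {k : ℕ} {pos : Vk k → EuclideanSpace ℝ (Fin 2)} {j : ℕ} (hj : 4 ≤ j) :
    tau k pos (j + 1) = tau k pos j / 2 := by
  unfold tau
  rw [if_neg (by omega : ¬ j + 1 ≤ 4)]
  rcases eq_or_lt_of_le hj with h | h
  · rw [if_pos (by omega : j ≤ 4), ← h]
    norm_num
    ring
  · rw [if_neg (by omega : ¬ j ≤ 4)]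
    have h2 : (256:ℝ) / 2 ^ (j+1) = (256 / 2 ^ j) / 2 := by
      rw [pow_succ, ← div_div]
    rw [h2]
    ring

lemma good_inv (k : ℕ) (pos : Vk k → EuclideanSpace ℝ (Fin 2))
    (hply : IsEmptyPly (T4 k) pos) :
    ∀ j, j ≤ k → ∀ v ∈ Good k pos j,
      v.1.length = j ∧ rr k pos v ≤ tau k pos j ∧ r0 k pos / 2 ^ j ≤ rr k pos v ∧
      dist (pos (rt k)) (pos v) ≤ Dd k pos j := by
  intro j
  induction j with
  | zero =>
    intro _ v hv
    simp only [Good, Finset.mem_singleton] at hv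
    subst hv
    refine ⟨rfl, ?_, ?_, ?_⟩
    · unfold tau
      rw [if_pos (by norm_num : (0:ℕ) ≤ 4)]
      simp [r0]
    · simp [r0]
    · simp [Dd]
  | succ j ih =>
    intro hj1 v hv
    simp only [Good, Finset.mem_filter] at hv
    obtain ⟨hkid, hle⟩ := hv
    rw [mem_kids] at hkid
    obtain ⟨p, hp, x, rfl⟩ := hkid
    obtain ⟨hplen, hrple, hrpge, hdp⟩ := ih (by omega) p hp
    have hpltk : p.1.length < k := by omega
    have hcv : (childF k p x).1 = x :: p.1 := childF_val hpltk x
    have hadj : (T4 k).Adj p (childF k p x) := adj_childF hpltk x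
    have hne : p ≠ childF k p x := hadj.ne
    have hedge : dist (pos p) (pos (childF k p x)) ≤ 2 * rr k pos (childF k p x) := by
      rw [dist_comm]
      exact dist_le_two_rr k pos hadj.symm
    refine ⟨?_, hle, ?_, ?_⟩
    · rw [hcv]
      simp [hplen]
    · have h1 : rr k pos p ≤ dist (pos (childF k p x)) (pos p) := hply _ _ hne.symm
      have h2 : dist (pos (childF k p x)) (pos p) = dist (pos p) (pos (childF k p x)) :=
        dist_comm _ _
      have h3 : r0 k pos / 2 ^ (j+1) = (r0 k pos / 2 ^ j) / 2 := by
        rw [pow_succ, ← div_div]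
      rw [h3]
      linarith
    · calc dist (pos (rt k)) (pos (childF k p x))
          ≤ dist (pos (rt k)) (pos p) + dist (pos p) (pos (childF k p x)) :=
            dist_triangle _ _ _
        _ ≤ Dd k pos j + 2 * tau k pos (j + 1) := by linarith
        _ = Dd k pos (j + 1) := by simp [Dd]

lemma bad_inv (k : ℕ) (pos : Vk k → EuclideanSpace ℝ (Fin 2))
    (hply : IsEmptyPly (T4 k) pos) :
    ∀ j, j + 1 ≤ k → ∀ v ∈ Bad k pos (j + 1),
      v.1.length = j + 1 ∧ tau k pos (j + 1) < rr k pos v ∧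
      rr k pos v ≤ 2 * tau k pos j ∧
      dist (pos (rt k)) (pos v) ≤ Dd k pos j + 2 * tau k pos j := by
  intro j hj1 v hv
  simp only [Bad, Finset.mem_sdiff] at hv
  obtain ⟨hkid, hnotgood⟩ := hv
  have hnotle : ¬ rr k pos v ≤ tau k pos (j + 1) := by
    intro hcon
    exact hnotgood (by simp only [Good, Finset.mem_filter]; exact ⟨hkid, hcon⟩)
  rw [mem_kids] at hkid
  obtain ⟨p, hp, x, rfl⟩ := hkid
  obtain ⟨hplen, hrple, hrpge, hdp⟩ := good_inv k pos hply j (by omega) p hp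
  have hpltk : p.1.length < k := by omega
  have hcv : (childF k p x).1 = x :: p.1 := childF_val hpltk x
  have hadj : (T4 k).Adj p (childF k p x) := adj_childF hpltk x
  have hne : p ≠ childF k p x := hadj.ne
  have hedge : dist (pos p) (pos (childF k p x)) ≤ 2 * rr k pos p :=
    dist_le_two_rr k pos hadj
  have hrv : rr k pos (childF k p x) ≤ dist (pos p) (pos (childF k p x)) := hply _ _ hne
  refine ⟨?_, lt_of_not_ge hnotle, ?_, ?_⟩
  · rw [hcv]; simp [hplen]
  · linarith
  · calc dist (pos (rt k)) (pos (childF k p x))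
        ≤ dist (pos (rt k)) (pos p) + dist (pos p) (pos (childF k p x)) := dist_triangle _ _ _
      _ ≤ Dd k pos j + 2 * tau k pos j := by linarith

lemma bad_empty (k : ℕ) (pos : Vk k → EuclideanSpace ℝ (Fin 2))
    (hply : IsEmptyPly (T4 k) pos) {j : ℕ} (hj4 : j + 1 ≤ 4) (hjk : j + 1 ≤ k) :
    Bad k pos (j + 1) = ∅ := by
  rw [Finset.eq_empty_iff_forall_notMem]
  intro v hv
  obtain ⟨_, hgt, hle2, _⟩ := bad_inv k pos hply j hjk v hv
  rw [tau_succ_small (by omega : j ≤ 3)] at hgt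
  linarith

lemma good_card_succ (k : ℕ) (pos : Vk k → EuclideanSpace ℝ (Fin 2))
    (hply : IsEmptyPly (T4 k) pos) {j : ℕ} (hjk : j + 1 ≤ k) :
    (Good k pos (j + 1)).card + (Bad k pos (j + 1)).card = 4 * (Good k pos j).card := by
  have hlen : ∀ p ∈ Good k pos j, p.1.length < k := by
    intro p hp
    have := (good_inv k pos hply j (by omega) p hp).1
    omega
  have hkids : (kids k (Good k pos j)).card = 4 * (Good k pos j).card := by
    unfold kids
    rw [Finset.card_image_of_injOn, Finset.card_product, Finset.card_univ, Fintype.card_fin]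
    · ring
    · rintro ⟨p, x⟩ hpx ⟨q, y⟩ hqy heq
      simp only [Finset.coe_product, Set.mem_prod, Finset.mem_coe] at hpx hqy
      have hp := hlen p hpx.1
      have hq := hlen q hqy.1
      have h1 : (childF k p x).1 = x :: p.1 := childF_val hp x
      have h2 : (childF k q y).1 = y :: q.1 := childF_val hq y
      have e1 : childF k p x = childF k q y := heq
      have h3 := congrArg Subtype.val e1
      rw [h1, h2] at h3
      simp only [List.cons.injEq] at h3
      exact Prod.ext_iff.mpr ⟨Subtype.ext h3.2, h3.1⟩
  have hsub : Good k pos (j + 1) ⊆ kids k (Good k pos j) := by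
    intro v hv
    simp only [Good, Finset.mem_filter] at hv
    exact hv.1
  have := Finset.card_sdiff_add_card_eq_card hsub
  have hbad : Bad k pos (j + 1) = kids k (Good k pos j) \ Good k pos (j + 1) := by
    simp [Bad]
  rw [hbad]
  omega

lemma Dd_small (k : ℕ) (pos : Vk k → EuclideanSpace ℝ (Fin 2))
    (h0 : 0 ≤ r0 k pos) :
    ∀ j, j ≤ 3 → Dd k pos j ≤ ((2:ℝ) ^ (j + 2) - 4) * r0 k pos := by
  intro j
  induction j with
  | zero =>
    intro _
    simp only [Dd]
    norm_num
  | succ j ih =>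
    intro hj
    have h1 : Dd k pos j ≤ ((2:ℝ) ^ (j + 2) - 4) * r0 k pos := ih (by omega)
    have h2 : tau k pos (j + 1) = (2:ℝ) ^ (j + 1) * r0 k pos := by
      unfold tau
      rw [if_pos (by omega : j + 1 ≤ 4)]
    simp only [Dd, h2]
    have h3 : ((2:ℝ) ^ (j + 1 + 2) - 4) = ((2:ℝ) ^ (j + 2) - 4) + 2 * 2 ^ (j + 1) := by
      rw [pow_succ, pow_succ, pow_succ]
      ring
    rw [h3, add_mul]
    linarith

lemma Dd_tau (k : ℕ) (pos : Vk k → EuclideanSpace ℝ (Fin 2))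
    (h0 : 0 ≤ r0 k pos) :
    ∀ j, Dd k pos j + 2 * tau k pos j ≤ 92 * r0 k pos := by
  intro j
  induction j with
  | zero =>
    simp only [Dd]
    unfold tau
    rw [if_pos (by norm_num : (0:ℕ) ≤ 4), pow_zero]
    linarith
  | succ j ih =>
    have hDsucc : Dd k pos (j + 1) = Dd k pos j + 2 * tau k pos (j + 1) := by simp [Dd]
    rcases Nat.lt_or_ge j 4 with hj | hj
    · -- j ≤ 3
      have h1 : Dd k pos j ≤ ((2:ℝ) ^ (j + 2) - 4) * r0 k pos := Dd_small k pos h0 j (by omega)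
      have h2 : tau k pos (j + 1) = (2:ℝ) ^ (j + 1) * r0 k pos := by
        unfold tau
        rw [if_pos (by omega : j + 1 ≤ 4)]
      have h3 : (2:ℝ) ^ (j + 2) ≤ 2 ^ 5 := pow_le_pow_right₀ (by norm_num) (by omega)
      have h4 : (2:ℝ) ^ (j + 1) ≤ 2 ^ 4 := pow_le_pow_right₀ (by norm_num) (by omega)
      have h5 : (0:ℝ) ≤ 2 ^ (j + 1) := by positivity
      rw [hDsucc, h2]
      have h6 : (2:ℝ) ^ 5 = 32 := by norm_num
      have h7 : (2:ℝ) ^ 4 = 16 := by norm_num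
      nlinarith
    · -- 4 ≤ j
      rw [hDsucc, tau_succ_big hj]
      linarith

lemma two_pow_sq (j : ℕ) : ((2:ℝ) ^ j) ^ 2 = 4 ^ j := by
  rw [← pow_mul, mul_comm, pow_mul]
  norm_num

end Stmt14Aux

theorem stmt14 (k : ℕ) (hk : 2 ^ 16 ≤ k) (hke : Even k) :
    ¬ ∃ pos : {l : List (Fin 4) // l.length ≤ k} → EuclideanSpace ℝ (Fin 2),
        Function.Injective pos ∧ IsEmptyPly (T4 k) pos := by
  classical
  rintro ⟨pos, hinj, hply⟩
  open Stmt14Aux in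
  have hk65536 : 65536 ≤ k := by norm_num at hk; exact hk
  have hk1 : 1 ≤ k := by omega
  -- the root radius is positive
  have hrtlen : (Stmt14Aux.rt k).1.length < k := by
    show ([] : List (Fin 4)).length < k
    simp only [List.length_nil]; omega
  have hadj0 : (T4 k).Adj (Stmt14Aux.rt k) (Stmt14Aux.childF k (Stmt14Aux.rt k) 0) :=
    Stmt14Aux.adj_childF hrtlen 0
  have hne0 : Stmt14Aux.rt k ≠ Stmt14Aux.childF k (Stmt14Aux.rt k) 0 := hadj0.ne
  have hd0 : 0 < dist (pos (Stmt14Aux.rt k)) (pos (Stmt14Aux.childF k (Stmt14Aux.rt k) 0)) := by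
    rw [dist_pos]
    intro h
    exact hne0 (hinj h)
  have h2r := Stmt14Aux.dist_le_two_rr k pos hadj0
  have h0 : 0 < Stmt14Aux.r0 k pos := by
    have : Stmt14Aux.r0 k pos = Stmt14Aux.rr k pos (Stmt14Aux.rt k) := rfl
    rw [this]; linarith
  have h0' : (0:ℝ) ≤ Stmt14Aux.r0 k pos := le_of_lt h0
  -- length of members
  have hlenU : ∀ j, j ≤ k → ∀ v ∈ Stmt14Aux.Good k pos j ∪ Stmt14Aux.Bad k pos j,
      v.1.length = j := by
    intro j hjk v hv
    rcases Finset.mem_union.mp hv with h | h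
    · exact (Stmt14Aux.good_inv k pos hply j hjk v h).1
    · cases j with
      | zero => simp [Stmt14Aux.Bad] at h
      | succ j => exact (Stmt14Aux.bad_inv k pos hply j hjk v h).1
  -- membership facts for the packing
  have hfacts : ∀ j, j ≤ k → ∀ v ∈ Stmt14Aux.Good k pos j ∪ Stmt14Aux.Bad k pos j,
      0 ≤ Stmt14Aux.rr k pos v ∧
      dist (pos v) (pos (Stmt14Aux.rt k)) + Stmt14Aux.rr k pos v / 2
        ≤ 108 * Stmt14Aux.r0 k pos := by
    intro j hjk v hv
    have htau16 := Stmt14Aux.tau_le16 (pos := pos) h0' j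
    have htau0 := Stmt14Aux.tau_nonneg (pos := pos) h0' j
    rcases Finset.mem_union.mp hv with h | h
    · obtain ⟨hlen, hub, hlb, hdist⟩ := Stmt14Aux.good_inv k pos hply j hjk v h
      have hDd := Stmt14Aux.Dd_tau k pos h0' j
      have h2j : (0:ℝ) < 2 ^ j := by positivity
      have hlb0 : (0:ℝ) < Stmt14Aux.r0 k pos / 2 ^ j := by positivity
      constructor
      · linarith
      · rw [dist_comm]
        linarith
    · cases j with
      | zero => simp [Stmt14Aux.Bad] at h
      | succ j =>
        obtain ⟨hlen, hgt, hub, hdist⟩ := Stmt14Aux.bad_inv k pos hply j hjk v h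
        have htj16 := Stmt14Aux.tau_le16 (pos := pos) h0' (j + 1)
        have htj0 := Stmt14Aux.tau_nonneg (pos := pos) h0' (j + 1)
        have htj16' := Stmt14Aux.tau_le16 (pos := pos) h0' j
        have htj0' := Stmt14Aux.tau_nonneg (pos := pos) h0' j
        have hDd := Stmt14Aux.Dd_tau k pos h0' j
        constructor
        · linarith
        · rw [dist_comm]
          linarith
  -- the combined finset
  set U : Finset (Stmt14Aux.Vk k) :=
    (Finset.range (k + 1)).biUnion
      (fun j => Stmt14Aux.Good k pos j ∪ Stmt14Aux.Bad k pos j) with hU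
  -- packing inequality
  have hpack : ∑ v ∈ U, (Stmt14Aux.rr k pos v / 2) ^ 2 ≤ (108 * Stmt14Aux.r0 k pos) ^ 2 := by
    apply Stmt14Aux.packing U pos (fun v => Stmt14Aux.rr k pos v / 2) (pos (Stmt14Aux.rt k))
        (108 * Stmt14Aux.r0 k pos) (by linarith)
    · intro v hv
      rw [hU, Finset.mem_biUnion] at hv
      obtain ⟨j, hj, hv⟩ := hv
      have hjk : j ≤ k := by
        have := Finset.mem_range.mp hj
        omega
      have := (hfacts j hjk v hv).1
      linarith
    · intro v hv
      rw [hU, Finset.mem_biUnion] at hv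
      obtain ⟨j, hj, hv⟩ := hv
      have hjk : j ≤ k := by
        have := Finset.mem_range.mp hj
        omega
      exact (hfacts j hjk v hv).2
    · intro u hu v hv huv
      have h1 : Stmt14Aux.rr k pos v ≤ dist (pos u) (pos v) := hply u v huv
      have h2 : Stmt14Aux.rr k pos u ≤ dist (pos v) (pos u) := hply v u (Ne.symm huv)
      rw [dist_comm] at h2
      linarith
  -- disjointness across levels
  have hPD : Set.PairwiseDisjoint ↑(Finset.range (k + 1))
      (fun j => Stmt14Aux.Good k pos j ∪ Stmt14Aux.Bad k pos j) := by
    intro i hi j hj hij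
    simp only [Finset.coe_range, Set.mem_Iio] at hi hj
    simp only [Function.onFun]
    rw [Finset.disjoint_left]
    intro v hvi hvj
    have h1 := hlenU i (by omega) v hvi
    have h2 := hlenU j (by omega) v hvj
    omega
  have hsplit : ∑ v ∈ U, (Stmt14Aux.rr k pos v / 2) ^ 2
      = ∑ j ∈ Finset.range (k + 1),
          ∑ v ∈ Stmt14Aux.Good k pos j ∪ Stmt14Aux.Bad k pos j,
            (Stmt14Aux.rr k pos v / 2) ^ 2 := by
    rw [hU]
    exact Finset.sum_biUnion hPD
  -- per-level lower bound
  have hlev : ∀ j ∈ Finset.range (k + 1),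
      (((Stmt14Aux.Good k pos j).card + 65536 * (Stmt14Aux.Bad k pos j).card : ℕ) : ℝ)
          * ((Stmt14Aux.r0 k pos) ^ 2 / (4 * 4 ^ j))
        ≤ ∑ v ∈ Stmt14Aux.Good k pos j ∪ Stmt14Aux.Bad k pos j,
            (Stmt14Aux.rr k pos v / 2) ^ 2 := by
    intro j hj
    have hjk : j ≤ k := by
      have := Finset.mem_range.mp hj
      omega
    have hdisj : Disjoint (Stmt14Aux.Good k pos j) (Stmt14Aux.Bad k pos j) := by
      cases j with
      | zero => simp [Stmt14Aux.Bad]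
      | succ j =>
        show Disjoint (Stmt14Aux.Good k pos (j+1)) (Stmt14Aux.Bad k pos (j+1))
        simp only [Stmt14Aux.Bad]
        exact Finset.disjoint_sdiff
    rw [Finset.sum_union hdisj]
    have h4j : (0:ℝ) < 4 ^ j := by positivity
    have h2j : (0:ℝ) < 2 ^ j := by positivity
    have hgood : ((Stmt14Aux.Good k pos j).card : ℝ)
        * ((Stmt14Aux.r0 k pos) ^ 2 / (4 * 4 ^ j))
        ≤ ∑ v ∈ Stmt14Aux.Good k pos j, (Stmt14Aux.rr k pos v / 2) ^ 2 := by
      have hpt : ∀ v ∈ Stmt14Aux.Good k pos j,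
          (Stmt14Aux.r0 k pos) ^ 2 / (4 * 4 ^ j) ≤ (Stmt14Aux.rr k pos v / 2) ^ 2 := by
        intro v hv
        obtain ⟨_, _, hlb, _⟩ := Stmt14Aux.good_inv k pos hply j hjk v hv
        have hnn : (0:ℝ) ≤ Stmt14Aux.r0 k pos / 2 ^ j / 2 := by positivity
        have hmono : (Stmt14Aux.r0 k pos / 2 ^ j / 2) ^ 2 ≤ (Stmt14Aux.rr k pos v / 2) ^ 2 := by
          apply pow_le_pow_left₀ hnn
          linarith
        have hident : (Stmt14Aux.r0 k pos / 2 ^ j / 2) ^ 2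
            = (Stmt14Aux.r0 k pos) ^ 2 / (4 * 4 ^ j) := by
          rw [← Stmt14Aux.two_pow_sq j]
          field_simp
          ring
        rw [← hident]
        exact hmono
      have := Finset.card_nsmul_le_sum (Stmt14Aux.Good k pos j)
        (fun v => (Stmt14Aux.rr k pos v / 2) ^ 2)
        ((Stmt14Aux.r0 k pos) ^ 2 / (4 * 4 ^ j)) hpt
      simpa [nsmul_eq_mul] using this
    have hbad : ((Stmt14Aux.Bad k pos j).card : ℝ)
        * (65536 * ((Stmt14Aux.r0 k pos) ^ 2 / (4 * 4 ^ j)))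
        ≤ ∑ v ∈ Stmt14Aux.Bad k pos j, (Stmt14Aux.rr k pos v / 2) ^ 2 := by
      have hpt : ∀ v ∈ Stmt14Aux.Bad k pos j,
          65536 * ((Stmt14Aux.r0 k pos) ^ 2 / (4 * 4 ^ j)) ≤ (Stmt14Aux.rr k pos v / 2) ^ 2 := by
        intro v hv
        cases j with
        | zero => simp [Stmt14Aux.Bad] at hv
        | succ j =>
          by_cases hj4 : j + 1 ≤ 4
          · rw [Stmt14Aux.bad_empty k pos hply hj4 hjk] at hv
            simp at hv
          · obtain ⟨_, hgt, _, _⟩ := Stmt14Aux.bad_inv k pos hply j hjk v hv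
            have htval : Stmt14Aux.tau k pos (j + 1)
                = 256 / 2 ^ (j + 1) * Stmt14Aux.r0 k pos := by
              unfold Stmt14Aux.tau
              rw [if_neg hj4]
            have hnn : (0:ℝ) ≤ 256 / 2 ^ (j + 1) * Stmt14Aux.r0 k pos / 2 := by positivity
            have hmono : (256 / 2 ^ (j + 1) * Stmt14Aux.r0 k pos / 2) ^ 2
                ≤ (Stmt14Aux.rr k pos v / 2) ^ 2 := by
              apply pow_le_pow_left₀ hnn
              rw [htval] at hgt
              linarith
            have hident : (256 / 2 ^ (j + 1) * Stmt14Aux.r0 k pos / 2) ^ 2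
                = 65536 * ((Stmt14Aux.r0 k pos) ^ 2 / (4 * 4 ^ (j + 1))) := by
              rw [← Stmt14Aux.two_pow_sq (j + 1)]
              field_simp
              ring
            rw [← hident]
            exact hmono
      have := Finset.card_nsmul_le_sum (Stmt14Aux.Bad k pos j)
        (fun v => (Stmt14Aux.rr k pos v / 2) ^ 2)
        (65536 * ((Stmt14Aux.r0 k pos) ^ 2 / (4 * 4 ^ j))) hpt
      simpa [nsmul_eq_mul] using this
    push_cast
    nlinarith [hgood, hbad]
  -- counting
  have hnat := Stmt14Aux.natlem k (by omega)
    (fun j => (Stmt14Aux.Good k pos j).card)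
    (fun j => (Stmt14Aux.Bad k pos j).card)
    (by simp [Stmt14Aux.Good])
    (fun j hj => Stmt14Aux.good_card_succ k pos hply (by omega))
  -- assembling the lower bound
  have h4k : (0:ℝ) < 4 ^ k := by positivity
  have hlow : 16384 * (Stmt14Aux.r0 k pos) ^ 2 ≤ ∑ v ∈ U, (Stmt14Aux.rr k pos v / 2) ^ 2 := by
    have hperterm : ∀ j ∈ Finset.range (k + 1),
        ((((Stmt14Aux.Good k pos j).card + 65536 * (Stmt14Aux.Bad k pos j).card)
            * 4 ^ (k - j) : ℕ) : ℝ) * ((Stmt14Aux.r0 k pos) ^ 2 / (4 * 4 ^ k))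
        = (((Stmt14Aux.Good k pos j).card + 65536 * (Stmt14Aux.Bad k pos j).card : ℕ) : ℝ)
            * ((Stmt14Aux.r0 k pos) ^ 2 / (4 * 4 ^ j)) := by
      intro j hj
      have hjk : j ≤ k := by
        have := Finset.mem_range.mp hj
        omega
      have hpow : (4:ℝ) ^ (k - j) * 4 ^ j = 4 ^ k := by
        rw [← pow_add]
        congr 1
        omega
      have hscal : (4:ℝ) ^ (k - j) * ((Stmt14Aux.r0 k pos) ^ 2 / (4 * 4 ^ k))
          = (Stmt14Aux.r0 k pos) ^ 2 / (4 * 4 ^ j) := by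
        rw [← hpow]
        have ha : (4:ℝ) ^ (k - j) ≠ 0 := by positivity
        have hb : (4:ℝ) ^ j ≠ 0 := by positivity
        field_simp
      push_cast
      rw [mul_assoc, hscal]
    calc 16384 * (Stmt14Aux.r0 k pos) ^ 2
        = ((65536 * 4 ^ k : ℕ) : ℝ) * ((Stmt14Aux.r0 k pos) ^ 2 / (4 * 4 ^ k)) := by
          push_cast
          field_simp
          ring
      _ ≤ ((∑ j ∈ Finset.range (k + 1),
            ((Stmt14Aux.Good k pos j).card + 65536 * (Stmt14Aux.Bad k pos j).card)
              * 4 ^ (k - j) : ℕ) : ℝ) * ((Stmt14Aux.r0 k pos) ^ 2 / (4 * 4 ^ k)) := by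
          apply mul_le_mul_of_nonneg_right _ (by positivity)
          exact_mod_cast hnat
      _ = ∑ j ∈ Finset.range (k + 1),
            ((((Stmt14Aux.Good k pos j).card + 65536 * (Stmt14Aux.Bad k pos j).card)
              * 4 ^ (k - j) : ℕ) : ℝ) * ((Stmt14Aux.r0 k pos) ^ 2 / (4 * 4 ^ k)) := by
          rw [Nat.cast_sum, Finset.sum_mul]
      _ = ∑ j ∈ Finset.range (k + 1),
            (((Stmt14Aux.Good k pos j).card + 65536 * (Stmt14Aux.Bad k pos j).card : ℕ) : ℝ)
              * ((Stmt14Aux.r0 k pos) ^ 2 / (4 * 4 ^ j)) :=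
          Finset.sum_congr rfl hperterm
      _ ≤ ∑ j ∈ Finset.range (k + 1),
            ∑ v ∈ Stmt14Aux.Good k pos j ∪ Stmt14Aux.Bad k pos j,
              (Stmt14Aux.rr k pos v / 2) ^ 2 := Finset.sum_le_sum hlev
      _ = ∑ v ∈ U, (Stmt14Aux.rr k pos v / 2) ^ 2 := hsplit.symm
  nlinarith [hpack, hlow, mul_pos h0 h0]
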